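/- The solution operator S : ℝ^n → ℝ^n of VI is directionally differentiable: for every u, h ∈ ℝ^n the limit S′(u; h) := lim_{t→0⁺} (S(u + t h) − S(u))/t exists, and S′(u; h) is the unique solution η ∈ 𝒦(y), with y = S(u), of the variational inequality of the first kind ⟨Aη, v−η⟩ + ∑_{j∈ℐ(y)} ⟨(𝕂η)_j/|(𝕂y)_j| − ⟨(𝕂y)_j, (𝕂η)_j⟩ (𝕂y)_j/|(𝕂y)_j|³, (𝕂v)_j − (𝕂η)_j⟩ ≥ ⟨h, v−η⟩ for all v ∈ 𝒦(y). -/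

import Mathlib

open scoped RealInnerProductSpace BigOperators Classical Topology

noncomputable section

abbrev Euc (n : ℕ) := EuclideanSpace ℝ (Fin n)
abbrev Rows (m d : ℕ) := PiLp 2 (fun _ : Fin m => EuclideanSpace ℝ (Fin d))

variable {n m d : ℕ}

/-- `y` solves the variational inequality VI(u). -/
def IsVISol (A : Euc n →ₗ[ℝ] Euc n) (K : Euc n →ₗ[ℝ] Rows m d) (u y : Euc n) : Prop :=
  ∀ v : Euc n, ⟪A y, v - y⟫ + ∑ j, (‖K v j‖ - ‖K y j‖) ≥ ⟪u, v - y⟫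

/-- `q` is a slack variable for the pair `(u, y)`: primal-dual system. -/
def IsSlack (A : Euc n →ₗ[ℝ] Euc n) (K : Euc n →ₗ[ℝ] Rows m d) (u y : Euc n)
    (q : Rows m d) : Prop :=
  A y + (LinearMap.adjoint K) q = u ∧ (∀ j, ⟪q j, K y j⟫ = ‖K y j‖) ∧ ∀ j, ‖q j‖ ≤ 1

/-- The complementarity relations alone. -/
def ComplRel (K : Euc n →ₗ[ℝ] Rows m d) (y : Euc n) (q : Rows m d) : Prop :=
  (∀ j, ⟪q j, K y j⟫ = ‖K y j‖) ∧ ∀ j, ‖q j‖ ≤ 1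

/-- The cone `𝒦(y)` defined via a slack variable `q`. -/
def KconeQ (K : Euc n →ₗ[ℝ] Rows m d) (y : Euc n) (q : Rows m d) : Set (Euc n) :=
  {v | (∀ j, ‖q j‖ < 1 → K v j = 0) ∧
       ∀ j, ‖q j‖ = 1 → K y j = 0 → ⟪q j, K v j⟫ = ‖K v j‖}

/-- `∑_{j∈ℐ(y)} ⟨(𝕂y)_j/|(𝕂y)_j|, (𝕂v)_j⟩ + ∑_{j∈𝒜(y)} |(𝕂v)_j|`. -/
def dirRHS (K : Euc n →ₗ[ℝ] Rows m d) (y v : Euc n) : ℝ :=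
  ∑ j, if K y j ≠ 0 then ⟪(‖K y j‖)⁻¹ • K y j, K v j⟫ else ‖K v j‖

/-- The cone `𝒦(y)` in its slack-variable-free form. -/
def Kcone (A : Euc n →ₗ[ℝ] Euc n) (K : Euc n →ₗ[ℝ] Rows m d) (u y : Euc n) : Set (Euc n) :=
  {v | ⟪u - A y, v⟫ ≥ dirRHS K y v}

/-- Second order term `∑_{j∈ℐ(y)} ⟨(𝕂η)_j/|(𝕂y)_j| − ⟨(𝕂y)_j,(𝕂η)_j⟩(𝕂y)_j/|(𝕂y)_j|³, (𝕂w)_j⟩`. -/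
def secondForm (K : Euc n →ₗ[ℝ] Rows m d) (y η w : Euc n) : ℝ :=
  ∑ j, if K y j ≠ 0 then
      ⟪(‖K y j‖)⁻¹ • K η j - ((⟪K y j, K η j⟫) / ‖K y j‖ ^ 3) • K y j, K w j⟫
    else 0

/-- The quadratic functional `f_y` whose minimizer over `𝒦(y)` is the directional derivative. -/
def fy (A : Euc n →ₗ[ℝ] Euc n) (K : Euc n →ₗ[ℝ] Rows m d) (y h η : Euc n) : ℝ :=
  (1 / 2) * ⟪η, A η⟫ - ⟪h, η⟫ +
    (1 / 2) * ∑ j, if K y j ≠ 0 then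
        ‖K η j‖ ^ 2 / ‖K y j‖ - (⟪K y j, K η j⟫) ^ 2 / ‖K y j‖ ^ 3
      else 0

/-- `η` solves the VI of the first kind characterizing the directional derivative. -/
def VI1Sol (A : Euc n →ₗ[ℝ] Euc n) (K : Euc n →ₗ[ℝ] Rows m d) (u y h η : Euc n) : Prop :=
  η ∈ Kcone A K u y ∧ ∀ v ∈ Kcone A K u y,
    ⟪A η, v - η⟫ + secondForm K y η (v - η) ≥ ⟪h, v - η⟫

/-- Bouligand subdifferential of a map `S` at `u`. -/
def BSubdiff (S : Euc n → Euc n) (u : Euc n) : Set (Euc n →L[ℝ] Euc n) :=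
  {G | ∃ (uk : ℕ → Euc n) (Gk : ℕ → (Euc n →L[ℝ] Euc n)),
    (∀ k, HasFDerivAt S (Gk k) (uk k)) ∧
    Filter.Tendsto uk Filter.atTop (nhds u) ∧
    Filter.Tendsto Gk Filter.atTop (nhds G)}

/-- Biactive set associated with `y` and a slack variable `q`. -/
def Biactive (K : Euc n →ₗ[ℝ] Rows m d) (y : Euc n) (q : Rows m d) : Set (Fin m) :=
  {j | K y j = 0 ∧ ‖q j‖ = 1}

/-- The subspace `V` associated with a splitting `ℬ₀ ∪ ℬ₁` of the biactive set. -/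
def Vsub (K : Euc n →ₗ[ℝ] Rows m d) (q : Rows m d) (B0 B1 : Set (Fin m)) : Set (Euc n) :=
  {v | (∀ j, ‖q j‖ < 1 → K v j = 0) ∧ (∀ j ∈ B0, K v j = 0) ∧
       ∀ j ∈ B1, ∃ c : ℝ, K v j = c • q j}

section AuxE
variable {E : Type*} [NormedAddCommGroup E] [InnerProductSpace ℝ E]

/-- Second-order remainder in the expansion of `t ↦ ‖a + t•b‖`. -/
def Fexp (a b : E) (t : ℝ) : ℝ :=
  (‖b‖^2*‖a‖ - ⟪a,b⟫*(2*⟪a,b⟫+t*‖b‖^2)/(‖a+t•b‖+‖a‖)) / (‖a‖*(‖a+t•b‖+‖a‖))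

lemma norm_add_smul_sq (a b : E) (t : ℝ) :
    ‖a+t•b‖^2 = ‖a‖^2 + 2*t*⟪a,b⟫ + t^2*‖b‖^2 := by
  rw [@norm_add_sq_real, inner_smul_right, norm_smul]
  simp [mul_pow]; ring

lemma norm_expand (a b : E) (t : ℝ) (ha : a ≠ 0) :
    ‖a+t•b‖ = ‖a‖ + t*(⟪a,b⟫/‖a‖) + t^2 * Fexp a b t := by
  have hd : (0:ℝ) < ‖a+t•b‖+‖a‖ := by have := norm_pos_iff.mpr ha; positivity
  have hA : (0:ℝ) < ‖a‖ := norm_pos_iff.mpr ha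
  have hsq := norm_add_smul_sq a b t
  rw [Fexp]
  field_simp
  linear_combination (‖a‖*(‖a+t•b‖+‖a‖) - t*⟪a,b⟫) * hsq

lemma Fexp_zero (a b : E) (ha : a ≠ 0) :
    Fexp a b 0 = (‖b‖^2/‖a‖ - ⟪a,b⟫^2/‖a‖^3)/2 := by
  have hA : (0:ℝ) < ‖a‖ := norm_pos_iff.mpr ha
  rw [Fexp]
  simp only [zero_smul, add_zero, zero_mul]
  field_simp
  ring

lemma continuous_Fexp_comp {X : Type*} [TopologicalSpace X] (a : E) (ha : a ≠ 0)
    {f : X → ℝ} {g : X → E}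
    (hf : Continuous f) (hg : Continuous g) : Continuous fun x => Fexp a (g x) (f x) := by
  have hA : (0:ℝ) < ‖a‖ := norm_pos_iff.mpr ha
  have hden : Continuous fun x : X => ‖a + f x • g x‖ + ‖a‖ :=
    ((continuous_const.add (hf.smul hg)).norm).add continuous_const
  have hdenne : ∀ x : X, ‖a + f x • g x‖ + ‖a‖ ≠ 0 := by
    intro p; have := norm_nonneg (a + f p • g p); positivity
  unfold Fexp
  apply Continuous.div
  · apply Continuous.sub
    · exact ((hg.norm.pow 2).mul continuous_const)
    · apply Continuous.div
      · exact (continuous_const.inner hg).mul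
          ((continuous_const.mul (continuous_const.inner hg)).add (hf.mul (hg.norm.pow 2)))
      · exact hden
      · exact hdenne
  · exact continuous_const.mul hden
  · intro p; have := hdenne p; positivity

lemma g_eval (a b c : E) :
    ⟪(‖a‖)⁻¹ • b - ((⟪a,b⟫)/‖a‖^3) • a, c⟫ = ⟪b,c⟫/‖a‖ - ⟪a,b⟫*⟪a,c⟫/‖a‖^3 := by
  rw [inner_sub_left, real_inner_smul_left, real_inner_smul_left]
  ring

lemma Fexp_zero_expand (a b c : E) (ha : a ≠ 0) (s : ℝ) :
    Fexp a (b + s • c) 0 = Fexp a b 0 + s * (⟪b,c⟫/‖a‖ - ⟪a,b⟫*⟪a,c⟫/‖a‖^3)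
      + s^2 * Fexp a c 0 := by
  have hA : (0:ℝ) < ‖a‖ := norm_pos_iff.mpr ha
  rw [Fexp_zero _ _ ha, Fexp_zero _ _ ha, Fexp_zero _ _ ha, norm_add_smul_sq,
    inner_add_right, inner_smul_right]
  field_simp
  ring

lemma Fexp_zero_nonneg (a b : E) : 0 ≤ Fexp a b 0 := by
  by_cases ha : a = 0
  · subst ha; simp [Fexp]
  have hA : (0:ℝ) < ‖a‖ := norm_pos_iff.mpr ha
  rw [Fexp_zero _ _ ha]
  have hcs : ⟪a,b⟫^2 ≤ ‖a‖^2 * ‖b‖^2 := by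
    have := abs_real_inner_le_norm a b
    nlinarith [abs_nonneg (⟪a,b⟫), sq_abs (⟪a,b⟫)]
  have h3 : (0:ℝ) < ‖a‖^3 := by positivity
  have hle : ⟪a,b⟫^2/‖a‖^3 ≤ ‖b‖^2/‖a‖ := by
    rw [div_le_div_iff₀ h3 hA]
    nlinarith
  linarith
end AuxE

section MainAux
variable {n m d : ℕ}

lemma hKcont (K : Euc n →ₗ[ℝ] Rows m d) (j : Fin m) :
    Continuous fun w : Euc n => K w j := by
  haveI : ContinuousSMul ℝ (Rows m d) := inferInstance
  exact (continuous_apply j).comp ((PiLp.continuous_ofLp 2 _).comp K.continuous_of_finiteDimensional)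

/-- total second-order remainder -/
def Ftot (K : Euc n →ₗ[ℝ] Rows m d) (y w : Euc n) (t : ℝ) : ℝ :=
  ∑ j, if K y j ≠ 0 then Fexp (K y j) (K w j) t else 0

lemma continuous_Ftot_comp {X : Type*} [TopologicalSpace X] (K : Euc n →ₗ[ℝ] Rows m d)
    (y : Euc n) {f : X → ℝ} {g : X → Euc n} (hf : Continuous f) (hg : Continuous g) :
    Continuous fun x => Ftot K y (g x) (f x) := by
  unfold Ftot
  apply continuous_finset_sum
  intro j _
  by_cases hj : K y j ≠ 0
  · simp only [if_pos hj]
    exact continuous_Fexp_comp _ hj hf ((hKcont K j).comp hg)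
  · simp only [if_neg hj]; exact continuous_const

lemma continuous_dirRHS (K : Euc n →ₗ[ℝ] Rows m d) (y : Euc n) :
    Continuous fun w : Euc n => dirRHS K y w := by
  unfold dirRHS
  apply continuous_finset_sum
  intro j _
  by_cases hj : K y j ≠ 0
  · simp only [if_pos hj]
    exact continuous_const.inner (hKcont K j)
  · simp only [if_neg hj]
    exact (hKcont K j).norm

lemma K_apply_add (K : Euc n →ₗ[ℝ] Rows m d) (y w : Euc n) (t : ℝ) (j : Fin m) :
    K (y + t • w) j = K y j + t • K w j := by
  rw [map_add, map_smul]; rfl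

lemma sum_norm_expand (K : Euc n →ₗ[ℝ] Rows m d) (y w : Euc n) {t : ℝ} (ht : 0 < t) :
    ∑ j, (‖K (y + t • w) j‖ - ‖K y j‖) = t * dirRHS K y w + t ^ 2 * Ftot K y w t := by
  rw [dirRHS, Ftot, Finset.mul_sum, Finset.mul_sum, ← Finset.sum_add_distrib]
  apply Finset.sum_congr rfl
  intro j _
  rw [K_apply_add]
  by_cases hj : K y j = 0
  · simp [hj, norm_smul, abs_of_pos ht]
  · rw [norm_expand _ _ _ hj, if_pos hj, if_pos hj, real_inner_smul_left]
    ring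

lemma secondForm_eval (K : Euc n →ₗ[ℝ] Rows m d) (y a w : Euc n) :
    secondForm K y a w = ∑ j, if K y j ≠ 0 then
      ⟪K a j, K w j⟫/‖K y j‖ - ⟪K y j, K a j⟫*⟪K y j, K w j⟫/‖K y j‖^3 else 0 := by
  unfold secondForm
  apply Finset.sum_congr rfl
  intro j _
  by_cases hj : K y j ≠ 0
  · rw [if_pos hj, if_pos hj, g_eval]
  · rw [if_neg hj, if_neg hj]

lemma secondForm_symm (K : Euc n →ₗ[ℝ] Rows m d) (y a w : Euc n) :
    secondForm K y a w = secondForm K y w a := by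
  rw [secondForm_eval, secondForm_eval]
  apply Finset.sum_congr rfl
  intro j _
  by_cases hj : K y j ≠ 0
  · rw [if_pos hj, if_pos hj, real_inner_comm (K a j) (K w j)]
    ring
  · rw [if_neg hj, if_neg hj]

lemma Ftot_zero_eq (K : Euc n →ₗ[ℝ] Rows m d) (y w : Euc n) :
    Ftot K y w 0 = secondForm K y w w / 2 := by
  rw [Ftot, secondForm_eval, Finset.sum_div]
  apply Finset.sum_congr rfl
  intro j _
  by_cases hj : K y j ≠ 0
  · rw [if_pos hj, if_pos hj, Fexp_zero _ _ hj, real_inner_comm (K w j) (K y j)]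
    rw [real_inner_self_eq_norm_sq]
    ring
  · rw [if_neg hj, if_neg hj]; simp

lemma Ftot_zero_nonneg (K : Euc n →ₗ[ℝ] Rows m d) (y w : Euc n) :
    0 ≤ Ftot K y w 0 := by
  rw [Ftot]
  apply Finset.sum_nonneg
  intro j _
  by_cases hj : K y j ≠ 0
  · rw [if_pos hj]; exact Fexp_zero_nonneg _ _
  · rw [if_neg hj]

lemma secondForm_self_nonneg (K : Euc n →ₗ[ℝ] Rows m d) (y w : Euc n) :
    0 ≤ secondForm K y w w := by
  have := Ftot_zero_nonneg K y w
  rw [Ftot_zero_eq] at this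
  linarith

lemma Ftot_zero_expand (K : Euc n →ₗ[ℝ] Rows m d) (y z w : Euc n) (s : ℝ) :
    Ftot K y (z + s • w) 0 = Ftot K y z 0 + s * secondForm K y z w + s^2 * Ftot K y w 0 := by
  rw [Ftot, Ftot, Ftot, secondForm_eval, Finset.mul_sum, Finset.mul_sum,
    ← Finset.sum_add_distrib, ← Finset.sum_add_distrib]
  apply Finset.sum_congr rfl
  intro j _
  by_cases hj : K y j ≠ 0
  · rw [if_pos hj, if_pos hj, if_pos hj, if_pos hj, K_apply_add,
      Fexp_zero_expand _ _ _ hj]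
  · rw [if_neg hj, if_neg hj, if_neg hj, if_neg hj]; simp

lemma secondForm_combine (K : Euc n →ₗ[ℝ] Rows m d) (y a b : Euc n) :
    secondForm K y a (b - a) + secondForm K y b (a - b)
      = - secondForm K y (a - b) (a - b) := by
  have hK : ∀ j, K (a - b) j = K a j - K b j := by
    intro j; rw [map_sub]; rfl
  have hK' : ∀ j, K (b - a) j = K b j - K a j := by
    intro j; rw [map_sub]; rfl
  rw [secondForm_eval, secondForm_eval, secondForm_eval, ← Finset.sum_add_distrib,
    ← Finset.sum_neg_distrib]
  apply Finset.sum_congr rfl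
  intro j _
  by_cases hj : K y j ≠ 0
  · rw [if_pos hj, if_pos hj, if_pos hj]
    simp only [hK, hK', inner_sub_left, inner_sub_right]
    rw [real_inner_comm (K b j) (K a j)]
    ring
  · rw [if_neg hj, if_neg hj, if_neg hj]; simp

lemma exists_coercive (A : Euc n →ₗ[ℝ] Euc n)
    (hApos : ∀ x : Euc n, x ≠ 0 → 0 < ⟪x, A x⟫) :
    ∃ c : ℝ, 0 < c ∧ ∀ x : Euc n, c * ‖x‖^2 ≤ ⟪x, A x⟫ := by
  by_cases hn : ∃ x : Euc n, x ≠ 0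
  · obtain ⟨x₀, hx₀⟩ := hn
    have hx₀n : (0:ℝ) < ‖x₀‖ := norm_pos_iff.mpr hx₀
    have hsph : (Metric.sphere (0:Euc n) 1).Nonempty := by
      refine ⟨‖x₀‖⁻¹ • x₀, ?_⟩
      simp [norm_smul, abs_of_pos (inv_pos.mpr hx₀n), inv_mul_cancel₀ hx₀n.ne']
    have hcont : Continuous fun x : Euc n => ⟪x, A x⟫ :=
      continuous_id.inner A.continuous_of_finiteDimensional
    obtain ⟨x₁, hx₁s, hx₁min'⟩ :=
      (isCompact_sphere (0:Euc n) 1).exists_isMinOn hsph hcont.continuousOn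
    have hx₁min := isMinOn_iff.mp hx₁min'
    have hx₁norm : ‖x₁‖ = 1 := by simpa using hx₁s
    have hx₁ne : x₁ ≠ 0 := by
      intro h0; rw [h0] at hx₁norm; simp at hx₁norm
    refine ⟨⟪x₁, A x₁⟫, hApos x₁ hx₁ne, ?_⟩
    intro x
    rcases eq_or_ne x 0 with rfl | hx
    · simp
    · have hxn : (0:ℝ) < ‖x‖ := norm_pos_iff.mpr hx
      have hmem : ‖x‖⁻¹ • x ∈ Metric.sphere (0:Euc n) 1 := by
        simp [norm_smul, abs_of_pos (inv_pos.mpr hxn), inv_mul_cancel₀ hxn.ne']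
      have hmin := hx₁min _ hmem
      rw [map_smul, real_inner_smul_left, real_inner_smul_right] at hmin
      have h2 : ⟪x₁, A x₁⟫ * ‖x‖^2 ≤ ⟪x, A x⟫ := by
        have := mul_le_mul_of_nonneg_left hmin (by positivity : (0:ℝ) ≤ ‖x‖^2)
        calc ⟪x₁, A x₁⟫ * ‖x‖^2 = ‖x‖^2 * ⟪x₁, A x₁⟫ := by ring
        _ ≤ ‖x‖^2 * (‖x‖⁻¹ * (‖x‖⁻¹ * ⟪x, A x⟫)) := this
        _ = ⟪x, A x⟫ := by field_simp
      linarith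
  · push_neg at hn
    refine ⟨1, one_pos, fun x => ?_⟩
    rw [hn x]
    simp

lemma dirRHS_upper {A : Euc n →ₗ[ℝ] Euc n} {K : Euc n →ₗ[ℝ] Rows m d} {u y : Euc n}
    (hy : IsVISol A K u y) (w : Euc n) : ⟪u - A y, w⟫ ≤ dirRHS K y w := by
  have hcF : ContinuousAt (fun s : ℝ => dirRHS K y w + s * Ftot K y w s) 0 := by
    have : Continuous fun s : ℝ => dirRHS K y w + s * Ftot K y w s := by
      refine continuous_const.add (continuous_id.mul ?_)
      exact continuous_Ftot_comp K y continuous_id continuous_const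
    exact this.continuousAt
  have hlim : Filter.Tendsto (fun s : ℝ => dirRHS K y w + s * Ftot K y w s)
      (nhdsWithin 0 (Set.Ioi 0)) (nhds (dirRHS K y w)) := by
    have := hcF.continuousWithinAt (s := Set.Ioi (0:ℝ))
    simpa using this.tendsto
  refine ge_of_tendsto hlim ?_
  filter_upwards [self_mem_nhdsWithin] with s hs
  have hs' : (0:ℝ) < s := hs
  have h1 := hy (y + s • w)
  have hyy : y + s • w - y = s • w := by abel
  rw [ge_iff_le, hyy, real_inner_smul_right, real_inner_smul_right,
    sum_norm_expand K y w hs'] at h1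
  have h4 : s * ⟪u - A y, w⟫ ≤ s * (dirRHS K y w + s * Ftot K y w s) := by
    rw [inner_sub_left]
    nlinarith [h1]
  exact le_of_mul_le_mul_left h4 hs'

lemma eta_bd {A : Euc n →ₗ[ℝ] Euc n} {K : Euc n →ₗ[ℝ] Rows m d} {S : Euc n → Euc n}
    (hS : ∀ u : Euc n, IsVISol A K u (S u)) {c : ℝ} (hc : 0 < c)
    (hcoe : ∀ x : Euc n, c * ‖x‖^2 ≤ ⟪x, A x⟫) (u h : Euc n) {t : ℝ} (ht : 0 < t) :
    ‖t⁻¹ • (S (u + t • h) - S u)‖ ≤ ‖h‖ / c := by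
  set y := S u with hy
  set yt := S (u + t • h) with hyt
  set dv := yt - y with hdv
  have h1 := hS u yt
  have h2 := hS (u + t • h) y
  rw [ge_iff_le] at h1 h2
  have hsum : (∑ j, (‖K yt j‖ - ‖K y j‖)) + (∑ j, (‖K y j‖ - ‖K yt j‖)) = 0 := by
    rw [← Finset.sum_add_distrib]; simp
  have hyd : y - yt = -dv := by rw [hdv]; abel
  have hA1 : ⟪A y, yt - y⟫ = ⟪A y, dv⟫ := rfl
  have hA2 : ⟪A yt, y - yt⟫ = -⟪A yt, dv⟫ := by rw [hyd, inner_neg_right]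
  have hu1 : ⟪u, yt - y⟫ = ⟪u, dv⟫ := rfl
  have hu2 : ⟪u + t • h, y - yt⟫ = -⟪u, dv⟫ - t * ⟪h, dv⟫ := by
    rw [hyd, inner_neg_right, inner_add_left, real_inner_smul_left]; ring
  rw [hA1, hu1] at h1
  rw [hA2, hu2] at h2
  have hAd : ⟪A y, dv⟫ - ⟪A yt, dv⟫ = -⟪dv, A dv⟫ := by
    have : A y - A yt = -A dv := by rw [hdv, map_sub]; abel
    rw [← inner_sub_left, this, inner_neg_left, real_inner_comm]
  have key : ⟪dv, A dv⟫ ≤ t * ⟪h, dv⟫ := by linarith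
  have hcs : ⟪h, dv⟫ ≤ ‖h‖ * ‖dv‖ := real_inner_le_norm h dv
  have hq : c * ‖dv‖^2 ≤ t * (‖h‖ * ‖dv‖) := by
    have := hcoe dv
    have ht' := ht.le
    nlinarith [norm_nonneg dv]
  have hdle : ‖dv‖ ≤ t * ‖h‖ / c := by
    rcases eq_or_lt_of_le (norm_nonneg dv) with h0 | h0
    · rw [← h0]; positivity
    · rw [le_div_iff₀ hc]; nlinarith
  rw [norm_smul, Real.norm_eq_abs]
  rw [abs_of_pos (inv_pos.mpr ht)]
  rw [inv_mul_le_iff₀ ht]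
  calc ‖dv‖ ≤ t * ‖h‖ / c := hdle
  _ = t * (‖h‖ / c) := by ring

lemma mapClusterPt_pair {α X Y : Type*} [TopologicalSpace X] [TopologicalSpace Y] {l : Filter α}
    {g : α → X} {f : α → Y} {x : X} {z : Y} (hg : Filter.Tendsto g l (nhds x))
    (hf : MapClusterPt z l f) :
    MapClusterPt (x, z) l (fun t => (g t, f t)) := by
  rw [mapClusterPt_iff_frequently] at hf ⊢
  intro s hs
  rw [nhds_prod_eq] at hs
  obtain ⟨U, hU, V, hV, hUV⟩ := Filter.mem_prod_iff.mp hs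
  exact ((hg.eventually_mem hU).and_frequently (hf V hV)).mono fun t ht => hUV ⟨ht.1, ht.2⟩

lemma cluster_nonneg {α : Type*} {l : Filter α} [l.NeBot] {f : α → ℝ} {x : ℝ}
    (hx : MapClusterPt x l f) (hev : ∀ᶠ t in l, 0 ≤ f t) : 0 ≤ x := by
  have hle : Filter.map f l ≤ Filter.principal (Set.Ici (0:ℝ)) :=
    Filter.le_principal_iff.mpr hev
  have hcl : ClusterPt x (Filter.principal (Set.Ici (0:ℝ))) := hx.clusterPt.mono hle
  have := mem_closure_iff_clusterPt.mpr hcl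
  rwa [IsClosed.closure_eq isClosed_Ici] at this

lemma cluster_transfer {l : Filter ℝ} [l.NeBot] {f : ℝ → Euc n} {z : Euc n}
    (hl : Filter.Tendsto (fun t : ℝ => t) l (nhds 0)) (hz : MapClusterPt z l f)
    {H : ℝ × Euc n → ℝ} (hH : Continuous H) (hev : ∀ᶠ t in l, 0 ≤ H (t, f t)) :
    0 ≤ H (0, z) := by
  have hp : MapClusterPt ((0:ℝ), z) l (fun t => (t, f t)) := mapClusterPt_pair hl hz
  have h2 : MapClusterPt (H (0, z)) l (H ∘ fun t => (t, f t)) :=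
    hp.continuousAt_comp hH.continuousAt
  exact cluster_nonneg h2 hev

lemma dirRHS_convex_comb (K : Euc n →ₗ[ℝ] Rows m d) (y z v : Euc n) {s : ℝ}
    (hs0 : 0 ≤ s) (hs1 : s ≤ 1) :
    dirRHS K y (z + s • (v - z)) ≤ (1 - s) * dirRHS K y z + s * dirRHS K y v := by
  have hKc : ∀ j, K (z + s • (v - z)) j = (1-s) • K z j + s • K v j := by
    intro j
    have : z + s • (v - z) = (1-s) • z + s • v := by
      rw [sub_smul, smul_sub, one_smul]; abel
    rw [this, map_add, map_smul, map_smul]; rfl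
  rw [dirRHS, dirRHS, dirRHS, Finset.mul_sum, Finset.mul_sum, ← Finset.sum_add_distrib]
  apply Finset.sum_le_sum
  intro j _
  rw [hKc j]
  by_cases hj : K y j ≠ 0
  · rw [if_pos hj, if_pos hj, if_pos hj, inner_add_right, real_inner_smul_right,
      real_inner_smul_right]
  · rw [if_neg hj, if_neg hj, if_neg hj]
    calc ‖(1-s) • K z j + s • K v j‖ ≤ ‖(1-s) • K z j‖ + ‖s • K v j‖ := norm_add_le _ _
    _ = (1-s) * ‖K z j‖ + s * ‖K v j‖ := by
        rw [norm_smul, norm_smul, Real.norm_eq_abs, Real.norm_eq_abs, abs_of_nonneg hs0,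
          abs_of_nonneg (by linarith : (0:ℝ) ≤ 1 - s)]

lemma Kcone_comb {A : Euc n →ₗ[ℝ] Euc n} {K : Euc n →ₗ[ℝ] Rows m d} {u y : Euc n}
    {z v : Euc n} (hz : z ∈ Kcone A K u y) (hv : v ∈ Kcone A K u y) {s : ℝ}
    (hs0 : 0 ≤ s) (hs1 : s ≤ 1) : z + s • (v - z) ∈ Kcone A K u y := by
  have hz' : ⟪u - A y, z⟫ ≥ dirRHS K y z := hz
  have hv' : ⟪u - A y, v⟫ ≥ dirRHS K y v := hv
  show ⟪u - A y, z + s • (v - z)⟫ ≥ dirRHS K y (z + s • (v - z))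
  have hlin : ⟪u - A y, z + s • (v - z)⟫
      = (1 - s) * ⟪u - A y, z⟫ + s * ⟪u - A y, v⟫ := by
    rw [inner_add_right, real_inner_smul_right, inner_sub_right]; ring
  have := dirRHS_convex_comb K y z v hs0 hs1
  rw [hlin]
  have h1 : (1 - s) * dirRHS K y z ≤ (1 - s) * ⟪u - A y, z⟫ :=
    mul_le_mul_of_nonneg_left hz' (by linarith)
  have h2 : s * dirRHS K y v ≤ s * ⟪u - A y, v⟫ :=
    mul_le_mul_of_nonneg_left hv' hs0
  linarith

lemma nonneg_factor {t X : ℝ} (ht : 0 < t) (h : 0 ≤ t * X) : 0 ≤ X := by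
  by_contra hX
  push_neg at hX
  nlinarith

lemma continuous_dirRHS_comp {X : Type*} [TopologicalSpace X] (K : Euc n →ₗ[ℝ] Rows m d)
    (y : Euc n) {g : X → Euc n} (hg : Continuous g) :
    Continuous fun x => dirRHS K y (g x) := by
  unfold dirRHS
  apply continuous_finset_sum
  intro j _
  by_cases hj : K y j ≠ 0
  · simp only [if_pos hj]
    exact continuous_const.inner ((hKcont K j).comp hg)
  · simp only [if_neg hj]
    exact ((hKcont K j).comp hg).norm

lemma dirRHS_zero (K : Euc n →ₗ[ℝ] Rows m d) (y : Euc n) : dirRHS K y 0 = 0 := by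
  rw [dirRHS]
  apply Finset.sum_eq_zero
  intro j _
  have h0 : K (0 : Euc n) j = 0 := by rw [map_zero]; rfl
  by_cases hj : K y j ≠ 0
  · rw [if_pos hj, h0, inner_zero_right]
  · rw [if_neg hj, h0, norm_zero]

lemma Ftot_zero_left (K : Euc n →ₗ[ℝ] Rows m d) (y : Euc n) (t : ℝ) : Ftot K y 0 t = 0 := by
  rw [Ftot]
  apply Finset.sum_eq_zero
  intro j _
  have h0 : K (0 : Euc n) j = 0 := by rw [map_zero]; rfl
  by_cases hj : K y j ≠ 0
  · rw [if_pos hj, h0, Fexp]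
    simp
  · rw [if_neg hj]

lemma VI_expand (A : Euc n →ₗ[ℝ] Euc n) (K : Euc n →ₗ[ℝ] Rows m d) (S : Euc n → Euc n)
    (hS : ∀ u : Euc n, IsVISol A K u (S u)) (u h w : Euc n) {t : ℝ} (ht : 0 < t) :
    t * ⟪u, w - t⁻¹ • (S (u + t • h) - S u)⟫ + t^2 * ⟪h, w - t⁻¹ • (S (u + t • h) - S u)⟫
      ≤ t * ⟪A (S u), w - t⁻¹ • (S (u + t • h) - S u)⟫
        + t^2 * ⟪A (t⁻¹ • (S (u + t • h) - S u)), w - t⁻¹ • (S (u + t • h) - S u)⟫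
        + (t * dirRHS K (S u) w + t^2 * Ftot K (S u) w t)
        - (t * dirRHS K (S u) (t⁻¹ • (S (u + t • h) - S u))
           + t^2 * Ftot K (S u) (t⁻¹ • (S (u + t • h) - S u)) t) := by
  set y := S u with hy
  set g : Euc n := t⁻¹ • (S (u + t • h) - S u) with hg
  have hYt : S (u + t • h) = y + t • g := by
    rw [hg, smul_inv_smul₀ ht.ne']
    abel
  have h2 := hS (u + t • h) (y + t • w)
  rw [ge_iff_le, hYt] at h2
  have e1 : y + t • w - (y + t • g) = t • (w - g) := by
    rw [smul_sub]; abel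
  have e2 : ∑ j, (‖K (y + t • w) j‖ - ‖K (y + t • g) j‖)
      = (t * dirRHS K y w + t^2 * Ftot K y w t)
        - (t * dirRHS K y g + t^2 * Ftot K y g t) := by
    rw [← sum_norm_expand K y w ht, ← sum_norm_expand K y g ht, ← Finset.sum_sub_distrib]
    apply Finset.sum_congr rfl
    intro j _
    ring
  rw [e1, e2] at h2
  rw [map_add, map_smul] at h2
  simp only [inner_add_left, real_inner_smul_left, real_inner_smul_right] at h2
  nlinarith [h2]

lemma cluster_solves (A : Euc n →ₗ[ℝ] Euc n) (K : Euc n →ₗ[ℝ] Rows m d) (S : Euc n → Euc n)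
    (hS : ∀ u : Euc n, IsVISol A K u (S u)) (u h : Euc n)
    {l' : Filter ℝ} [l'.NeBot] (hl' : l' ≤ nhdsWithin 0 (Set.Ioi 0)) {z : Euc n}
    (hz : MapClusterPt z l' (fun t => t⁻¹ • (S (u + t • h) - S u))) :
    VI1Sol A K u (S u) h z := by
  set y := S u with hy
  set f : ℝ → Euc n := fun t => t⁻¹ • (S (u + t • h) - S u) with hf
  have hAc : Continuous fun w : Euc n => A w := A.continuous_of_finiteDimensional
  have htend : Filter.Tendsto (fun t : ℝ => t) l' (nhds 0) :=
    Filter.tendsto_id.mono_left (hl'.trans nhdsWithin_le_nhds)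
  have hpos : ∀ᶠ t in l', 0 < t := by
    have : Set.Ioi (0:ℝ) ∈ l' := hl' self_mem_nhdsWithin
    exact Filter.eventually_of_mem this fun t ht => ht
  -- membership in the cone
  have hev1 : ∀ᶠ t in l', 0 ≤ ⟪u + t • h - A y - t • A (f t), f t⟫
      - dirRHS K y (f t) - t * Ftot K y (f t) t := by
    filter_upwards [hpos] with t ht
    have hexp := VI_expand A K S hS u h 0 ht
    rw [dirRHS_zero, Ftot_zero_left] at hexp
    simp only [zero_sub, inner_neg_right] at hexp
    have key : 0 ≤ t * (⟪u + t • h - A y - t • A (f t), f t⟫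
        - dirRHS K y (f t) - t * Ftot K y (f t) t) := by
      simp only [inner_sub_left, inner_add_left, real_inner_smul_left]
      nlinarith [hexp]
    exact nonneg_factor ht key
  have hH1 : Continuous fun p : ℝ × Euc n =>
      ⟪u + p.1 • h - A y - p.1 • A p.2, p.2⟫ - dirRHS K y p.2 - p.1 * Ftot K y p.2 p.1 := by
    refine Continuous.sub (Continuous.sub ?_ ?_) ?_
    · exact Continuous.inner
        (((continuous_const.add (continuous_fst.smul continuous_const)).sub
          continuous_const).sub (continuous_fst.smul (hAc.comp continuous_snd)))
        continuous_snd
    · exact continuous_dirRHS_comp K y continuous_snd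
    · exact continuous_fst.mul (continuous_Ftot_comp K y continuous_fst continuous_snd)
  have hzK : z ∈ Kcone A K u y := by
    have h1 := cluster_transfer htend hz hH1 hev1
    simp only [zero_smul, add_zero, sub_zero, zero_mul] at h1
    show ⟪u - A y, z⟫ ≥ dirRHS K y z
    linarith [h1]
  -- the limit variational inequality
  have hmin : ∀ v ∈ Kcone A K u y,
      0 ≤ ⟪A z - h, v - z⟫ + Ftot K y v 0 - Ftot K y z 0 := by
    intro v hv
    have hv' : ⟪u - A y, v⟫ ≥ dirRHS K y v := hv
    have hev2 : ∀ᶠ t in l', 0 ≤ ⟪A (f t) - h, v - f t⟫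
        + Ftot K y v t - Ftot K y (f t) t := by
      filter_upwards [hpos] with t ht
      have hexp := VI_expand A K S hS u h v ht
      have hup := dirRHS_upper (hS u) (f t)
      have key : 0 ≤ t^2 * (⟪A (f t) - h, v - f t⟫
          + Ftot K y v t - Ftot K y (f t) t) := by
        simp only [inner_sub_left, inner_sub_right] at hexp hup hv' ⊢
        nlinarith [hexp, mul_le_mul_of_nonneg_left hup ht.le,
          mul_le_mul_of_nonneg_left (ge_iff_le.mp hv') ht.le]
      exact nonneg_factor (by positivity) key
    have hH2 : Continuous fun p : ℝ × Euc n =>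
        ⟪A p.2 - h, v - p.2⟫ + Ftot K y v p.1 - Ftot K y p.2 p.1 := by
      refine Continuous.sub (Continuous.add ?_ ?_) ?_
      · exact Continuous.inner ((hAc.comp continuous_snd).sub continuous_const)
          (continuous_const.sub continuous_snd)
      · exact continuous_Ftot_comp K y continuous_fst continuous_const
      · exact continuous_Ftot_comp K y continuous_fst continuous_snd
    exact cluster_transfer htend hz hH2 hev2
  refine ⟨hzK, ?_⟩
  intro v hv
  set w := v - z with hw
  have hW : 0 ≤ Ftot K y w 0 := Ftot_zero_nonneg K y w
  have hstep : ∀ s : ℝ, 0 < s → s ≤ 1 →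
      0 ≤ s * (⟪A z - h, w⟫ + secondForm K y z w) + s^2 * Ftot K y w 0 := by
    intro s hs0 hs1
    have hmem := Kcone_comb hzK hv hs0.le hs1
    have hm := hmin _ hmem
    have e : z + s • (v - z) - z = s • w := by rw [hw]; abel
    rw [e, real_inner_smul_right, Ftot_zero_expand K y z w s] at hm
    · linarith [hm]
  have hX : 0 ≤ ⟪A z - h, w⟫ + secondForm K y z w := by
    set X := ⟪A z - h, w⟫ + secondForm K y z w with hXdef
    set W := Ftot K y w 0 with hWdef
    by_contra hXneg
    push_neg at hXneg
    have hs00 : 0 < min 1 (-X / (2 * (W + 1))) := by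
      apply lt_min one_pos
      apply div_pos (by linarith) (by linarith)
    have hs01 : min 1 (-X / (2 * (W + 1))) ≤ 1 := min_le_left _ _
    have hs02 : min 1 (-X / (2 * (W + 1))) ≤ -X / (2 * (W + 1)) := min_le_right _ _
    have hstep0 := hstep _ hs00 hs01
    set s0 := min 1 (-X / (2 * (W + 1)))
    have h3 : s0 * (2 * (W + 1)) ≤ -X := by
      rw [← le_div_iff₀ (by linarith : (0:ℝ) < 2 * (W + 1))]
      exact hs02
    nlinarith [mul_le_mul_of_nonneg_left h3 hs00.le, mul_pos hs00 (neg_pos.mpr hXneg),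
      mul_le_mul_of_nonneg_left hW (mul_nonneg hs00.le hs00.le)]
  rw [inner_sub_left] at hX
  show ⟪A z, w⟫ + secondForm K y z w ≥ ⟪h, w⟫
  linarith [hX]

lemma VI1_unique (A : Euc n →ₗ[ℝ] Euc n)
    (hApos : ∀ x : Euc n, x ≠ 0 → 0 < ⟪x, A x⟫) (K : Euc n →ₗ[ℝ] Rows m d)
    (u y h : Euc n) {η η' : Euc n}
    (h1 : VI1Sol A K u y h η) (h2 : VI1Sol A K u y h η') : η' = η := by
  by_contra hne
  have hd : η' - η ≠ 0 := sub_ne_zero.mpr hne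
  have e1 := h1.2 η' h2.1
  have e2 := h2.2 η h1.1
  have hcomb := secondForm_combine K y η η'
  have hBnn := secondForm_self_nonneg K y (η - η')
  have hpos := hApos _ hd
  have h5 : η - η' = -(η' - η) := by abel
  have hAc : ⟪A η, η' - η⟫ + ⟪A η', η - η'⟫ = -⟪η' - η, A (η' - η)⟫ := by
    rw [h5, inner_neg_right, ← sub_eq_add_neg, ← inner_sub_left, ← map_sub, h5, map_neg,
      inner_neg_left, real_inner_comm]
  have hh : ⟪h, η - η'⟫ = -⟪h, η' - η⟫ := by rw [h5, inner_neg_right]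
  linarith [e1, e2, hcomb, hBnn, hpos, hAc, hh]

end MainAux

/-- directional differentiability of the solution operator; the
directional derivative is the unique solution of the VI of the first kind. -/
theorem stmt12 {n m d : ℕ} (A : Euc n →ₗ[ℝ] Euc n)
    (hAsymm : ∀ x z : Euc n, ⟪A x, z⟫ = ⟪x, A z⟫)
    (hApos : ∀ x : Euc n, x ≠ 0 → 0 < ⟪x, A x⟫)
    (K : Euc n →ₗ[ℝ] Rows m d) (hK : Function.Injective K)
    (S : Euc n → Euc n) (hS : ∀ u : Euc n, IsVISol A K u (S u)) :
    ∀ u h : Euc n, ∃ η : Euc n,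
      Filter.Tendsto (fun t : ℝ => t⁻¹ • (S (u + t • h) - S u))
        (nhdsWithin 0 (Set.Ioi 0)) (nhds η) ∧
      VI1Sol A K u (S u) h η ∧
      ∀ η' : Euc n, VI1Sol A K u (S u) h η' → η' = η := by
  intro u h
  obtain ⟨c, hc, hcoe⟩ := exists_coercive A hApos
  set f : ℝ → Euc n := fun t => t⁻¹ • (S (u + t • h) - S u) with hf
  set l : Filter ℝ := nhdsWithin 0 (Set.Ioi 0) with hl
  have hball : ∀ᶠ t in l, f t ∈ Metric.closedBall (0 : Euc n) (‖h‖ / c) := by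
    filter_upwards [self_mem_nhdsWithin] with t ht
    rw [Metric.mem_closedBall, dist_zero_right]
    exact eta_bd hS hc hcoe u h ht
  obtain ⟨η, -, hη⟩ := (isCompact_closedBall (0 : Euc n) (‖h‖ / c)).exists_mapClusterPt
    (f := l) (u := f) (Filter.le_principal_iff.mpr hball)
  have hsol : VI1Sol A K u (S u) h η := cluster_solves A K S hS u h le_rfl hη
  refine ⟨η, ?_, hsol, fun η' h' => VI1_unique A hApos K u (S u) h hsol h'⟩
  -- convergence of the difference quotients
  by_contra hten
  rw [Metric.tendsto_nhds] at hten
  push_neg at hten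
  obtain ⟨ε, hε, hfreq⟩ := hten
  have hfreq' : ∃ᶠ t in l, ε ≤ dist (f t) η := hfreq
  have hne : (l ⊓ Filter.principal {t | ε ≤ dist (f t) η}).NeBot :=
    Filter.frequently_iff_neBot.mp hfreq'
  set l2 := l ⊓ Filter.principal {t | ε ≤ dist (f t) η} with hl2def
  have hl2 : l2 ≤ l := inf_le_left
  have hball2 : ∀ᶠ t in l2, f t ∈ Metric.closedBall (0 : Euc n) (‖h‖ / c) :=
    hball.filter_mono hl2
  obtain ⟨z, -, hzc⟩ := (isCompact_closedBall (0 : Euc n) (‖h‖ / c)).exists_mapClusterPt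
    (f := l2) (u := f) (Filter.le_principal_iff.mpr hball2)
  have hzsol : VI1Sol A K u (S u) h z := cluster_solves A K S hS u h hl2 hzc
  have hzeq : z = η := VI1_unique A hApos K u (S u) h hsol hzsol
  have hdist : ε ≤ dist z η := by
    have hCmem : {t : ℝ | ε ≤ dist (f t) η} ∈ l2 :=
      Filter.mem_inf_of_right (Filter.mem_principal_self _)
    have hmapc : Filter.map f l2 ≤ Filter.principal {x : Euc n | ε ≤ dist x η} :=
      Filter.le_principal_iff.mpr hCmem
    have hclos : ClusterPt z (Filter.principal {x : Euc n | ε ≤ dist x η}) :=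
      hzc.clusterPt.mono hmapc
    have hcl : z ∈ closure {x : Euc n | ε ≤ dist x η} :=
      mem_closure_iff_clusterPt.mpr hclos
    have hclosed : IsClosed {x : Euc n | ε ≤ dist x η} :=
      isClosed_le continuous_const (continuous_id.dist continuous_const)
    rwa [hclosed.closure_eq] at hcl
  rw [hzeq, dist_self] at hdist
  linarith
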